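/- The subdifferential of g* satisfies: if h is not identically zero, then for v ∈ dom g*, ∂g*(v) = {0} if |v| < τ, ∂g*(v) = sign(v)·[0, μ] ∩ ℝ if |v| = τ, and ∂g*(v) = ∂h*(v) if |v| > τ. -/

import Mathlib

noncomputable section

open Set
open scoped Classical

/-- Convex (Fenchel) conjugate of an extended-real-valued function on `ℝ`. -/
def conj (f : ℝ → EReal) (v : ℝ) : EReal := ⨆ x : ℝ, ((v * x : ℝ) : EReal) - f x

/-- Convex subdifferential of an extended-real-valued function on `ℝ`. -/
def subdiff (f : ℝ → EReal) (x : ℝ) : Set ℝ :=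
  {d : ℝ | ∀ y : ℝ, f x + ((d * (y - x) : ℝ) : EReal) ≤ f y}

/-- Convexity of an extended-real-valued function on `ℝ`. -/
def EConvexOn (f : ℝ → EReal) : Prop :=
  ∀ x y a b : ℝ, 0 ≤ a → 0 ≤ b → a + b = 1 →
    f (a * x + b * y) ≤ (a : EReal) * f x + (b : EReal) * f y

/-- The ℓ₀-penalized regularizer `g(x) = λ‖x‖₀ + h(x)`. -/
def gfun (lam : ℝ) (h : ℝ → EReal) (x : ℝ) : EReal :=
  (if x = 0 then (0 : EReal) else (lam : EReal)) + h x

/-- The parameter `τ = sup {v ≥ 0 : h*(v) ≤ λ}` (as a real number). -/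
def tau (lam : ℝ) (h : ℝ → EReal) : ℝ :=
  sSup {v : ℝ | 0 ≤ v ∧ conj h v ≤ (lam : EReal)}

/-- The parameter `μ = sup {x ≥ 0 : x ∈ ∂h*(τ)}` if `∂h*(τ) ≠ ∅`, else `+∞`. -/
def mu (lam : ℝ) (h : ℝ → EReal) : EReal :=
  if (subdiff (conj h) (tau lam h)).Nonempty then
    sSup ((fun x : ℝ => (x : EReal)) '' {x : ℝ | 0 ≤ x ∧ x ∈ subdiff (conj h) (tau lam h)})
  else ⊤

/-- The parameter `β = sup {v ≥ 0 : v ∈ dom h*}`. -/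
def beta (h : ℝ → EReal) : EReal :=
  sSup ((fun v : ℝ => (v : EReal)) '' {v : ℝ | 0 ≤ v ∧ conj h v ≠ ⊤})

/-- The parameter `κ = sup {v ≥ 0 : v ∈ ∂h(μ)}` if `μ < +∞`, else `+∞`. -/
def kappa (lam : ℝ) (h : ℝ → EReal) : EReal :=
  if mu lam h ≠ ⊤ then
    sSup ((fun v : ℝ => (v : EReal)) '' {v : ℝ | 0 ≤ v ∧ v ∈ subdiff h (mu lam h).toReal})
  else ⊤

/-- The set of minimizers of `u ↦ ½(u − v)² + γ·ω(u)`, i.e. `prox_{γω}(v)`. -/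
def proxSet (γ : ℝ) (ω : ℝ → EReal) (v : ℝ) : Set ℝ :=
  {u : ℝ | ∀ w : ℝ,
    ((2⁻¹ * (u - v) ^ 2 : ℝ) : EReal) + (γ : EReal) * ω u ≤
      ((2⁻¹ * (w - v) ^ 2 : ℝ) : EReal) + (γ : EReal) * ω w}

section Lemmas
variable {h : ℝ → EReal}

lemma term_le_conj (f : ℝ → EReal) (v x : ℝ) : ((v * x : ℝ) : EReal) - f x ≤ conj f v :=
  le_iSup (fun x : ℝ => ((v * x : ℝ) : EReal) - f x) x

lemma conj_le (f : ℝ → EReal) (v : ℝ) (c : EReal)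
    (H : ∀ x, ((v * x : ℝ) : EReal) - f x ≤ c) : conj f v ≤ c := iSup_le H

lemma Hnonneg (h0 : h 0 = 0) (v : ℝ) : 0 ≤ conj h v := by
  have := term_le_conj h v 0
  simpa [h0] using this

lemma H0 (h0 : h 0 = 0) (hge : ∀ x : ℝ, 0 ≤ h x) : conj h 0 = 0 := by
  refine le_antisymm (conj_le _ _ _ fun x => ?_) (Hnonneg h0 0)
  simp only [zero_mul, EReal.coe_zero]
  have : (0:EReal) - h x ≤ 0 - 0 := EReal.sub_le_sub le_rfl (hge x)
  simpa using this

lemma Heven (heven : ∀ x : ℝ, h (-x) = h x) (v : ℝ) : conj h (-v) = conj h v := by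
  have key : ∀ w : ℝ, conj h (-w) ≤ conj h w := by
    intro w
    refine conj_le _ _ _ fun x => ?_
    have := term_le_conj h w (-x)
    rw [heven x] at this
    convert this using 3
    ring
  have := key (-v); rw [neg_neg] at this
  exact le_antisymm (key v) this

lemma Habs (heven : ∀ x : ℝ, h (-x) = h x) (v : ℝ) : conj h v = conj h |v| := by
  rcases abs_cases v with ⟨e, _⟩ | ⟨e, _⟩
  · rw [e]
  · rw [e, Heven heven]

lemma Hmono (h0 : h 0 = 0) (hge : ∀ x : ℝ, 0 ≤ h x) (heven : ∀ x : ℝ, h (-x) = h x)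
    {u w : ℝ} (hu : 0 ≤ u) (huw : u ≤ w) : conj h u ≤ conj h w := by
  refine conj_le _ _ _ fun x => ?_
  have habs : h |x| = h x := by
    rcases abs_cases x with ⟨e, _⟩ | ⟨e, _⟩
    · rw [e]
    · rw [e, heven]
  have h1 : (u * x : ℝ) ≤ w * |x| := by
    calc u * x ≤ |u * x| := le_abs_self _
    _ = u * |x| := by rw [abs_mul, abs_of_nonneg hu]
    _ ≤ w * |x| := by nlinarith [abs_nonneg x]
  calc ((u * x : ℝ) : EReal) - h x ≤ ((w * |x| : ℝ) : EReal) - h |x| := by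
        rw [habs]; exact EReal.sub_le_sub (EReal.coe_le_coe_iff.2 h1) le_rfl
  _ ≤ conj h w := term_le_conj h w |x|

end Lemmas
section Lemmas2
variable {h : ℝ → EReal} {lam : ℝ}

lemma hfin (hge : ∀ x : ℝ, 0 ≤ h x) {x : ℝ} (hx : h x ≠ ⊤) : h x = ((h x).toReal : EReal) := by
  refine (EReal.coe_toReal hx ?_).symm
  intro hb
  have := hge x
  rw [hb] at this
  exact absurd this (by simp)

lemma Hcomb (hge : ∀ x : ℝ, 0 ≤ h x) {v y t p q : ℝ} (ht0 : 0 ≤ t) (ht1 : t ≤ 1)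
    (hp : conj h v ≤ (p : EReal)) (hq : conj h y ≤ (q : EReal)) :
    conj h ((1-t)*v + t*y) ≤ (((1-t)*p + t*q : ℝ) : EReal) := by
  refine conj_le _ _ _ fun x => ?_
  by_cases hx : h x = ⊤
  · rw [hx, EReal.sub_top]; exact bot_le
  · have hc := hfin hge hx
    set c := (h x).toReal with hcdef
    have h1 : v * x - c ≤ p := by
      have := (term_le_conj h v x).trans hp
      rw [hc, ← EReal.coe_sub] at this
      exact EReal.coe_le_coe_iff.1 this
    have h2 : y * x - c ≤ q := by
      have := (term_le_conj h y x).trans hq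
      rw [hc, ← EReal.coe_sub] at this
      exact EReal.coe_le_coe_iff.1 this
    rw [hc, ← EReal.coe_sub]
    refine EReal.coe_le_coe_iff.2 ?_
    nlinarith

lemma Gnonneg (h0 : h 0 = 0) (v : ℝ) : 0 ≤ conj (gfun lam h) v := by
  have := term_le_conj (gfun lam h) v 0
  simpa [gfun, h0] using this

lemma Gval (hlam : 0 < lam) (h0 : h 0 = 0) (hge : ∀ x : ℝ, 0 ≤ h x) (v : ℝ) :
    conj (gfun lam h) v = (conj h v - (lam : EReal)) ⊔ 0 := by
  refine le_antisymm (conj_le _ _ _ fun x => ?_) (sup_le ?_ (Gnonneg h0 v))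
  · by_cases hx0 : x = 0
    · refine le_trans ?_ le_sup_right
      simp [gfun, hx0, h0]
    · simp only [gfun, if_neg hx0]
      refine le_trans ?_ le_sup_left
      by_cases hx : h x = ⊤
      · rw [hx, EReal.coe_add_top, EReal.sub_top]; exact bot_le
      · have hc := hfin hge hx
        rw [hc, ← EReal.coe_add, ← EReal.coe_sub]
        have : ((v*x - (h x).toReal : ℝ) : EReal) ≤ conj h v := by
          have := term_le_conj h v x
          rwa [hc, ← EReal.coe_sub] at this
        calc ((v * x - (lam + (h x).toReal) : ℝ) : EReal)
            = ((v*x - (h x).toReal : ℝ) : EReal) - (lam : EReal) := by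
              rw [← EReal.coe_sub]; norm_cast; ring
        _ ≤ conj h v - (lam : EReal) := EReal.sub_le_sub this le_rfl
  · rw [EReal.sub_le_iff_le_add (Or.inl (EReal.coe_ne_bot lam)) (Or.inl (EReal.coe_ne_top lam))]
    refine iSup_le fun x => ?_
    by_cases hx0 : x = 0
    · have : (0:EReal) ≤ conj (gfun lam h) v + (lam:EReal) := by
        have := Gnonneg (lam := lam) h0 v
        have h2 : (0:EReal) ≤ (lam:EReal) := by exact_mod_cast hlam.le
        calc (0:EReal) = 0 + 0 := by simp
        _ ≤ conj (gfun lam h) v + lam := add_le_add this h2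
      simpa [hx0, h0] using this
    · by_cases hx : h x = ⊤
      · rw [hx, EReal.sub_top]; exact bot_le
      · have hc := hfin hge hx
        have hterm := term_le_conj (gfun lam h) v x
        have hgf : gfun lam h x = ((lam + (h x).toReal : ℝ) : EReal) := by
          simp only [gfun, if_neg hx0]
          conv_lhs => rw [hc]
          rw [← EReal.coe_add]
        rw [hgf, ← EReal.coe_sub] at hterm
        have : ((v * x : ℝ) : EReal) - h x = ((v*x - (lam + (h x).toReal) : ℝ) : EReal) + (lam : EReal) := by
          conv_lhs => rw [hc]
          rw [← EReal.coe_sub, ← EReal.coe_add]; norm_cast; ring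
        rw [this]
        exact add_le_add hterm le_rfl
end Lemmas2
section Lemmas3
variable {h : ℝ → EReal} {lam : ℝ}

def Sset (lam : ℝ) (h : ℝ → EReal) : Set ℝ := {v : ℝ | 0 ≤ v ∧ conj h v ≤ (lam : EReal)}

lemma habs_h (heven : ∀ x : ℝ, h (-x) = h x) (x : ℝ) : h |x| = h x := by
  rcases abs_cases x with ⟨e, _⟩ | ⟨e, _⟩
  · rw [e]
  · rw [e, heven]

lemma Szero (hlam : 0 < lam) (h0 : h 0 = 0) (hge : ∀ x : ℝ, 0 ≤ h x) : (0:ℝ) ∈ Sset lam h := by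
  refine ⟨le_rfl, ?_⟩
  rw [H0 h0 hge]
  exact_mod_cast hlam.le

lemma w_bound (hge : ∀ x : ℝ, 0 ≤ h x) {x : ℝ} (hx0 : 0 < x) (hxt : h x ≠ ⊤)
    {w : ℝ} (hw : w ∈ Sset lam h) : w ≤ (lam + (h x).toReal) / x := by
  have hc := hfin hge hxt
  have hterm := (term_le_conj h w x).trans hw.2
  rw [hc, ← EReal.coe_sub] at hterm
  have : w * x - (h x).toReal ≤ lam := EReal.coe_le_coe_iff.1 hterm
  rw [le_div_iff₀ hx0]
  linarith

lemma Sbdd (hge : ∀ x : ℝ, 0 ≤ h x) (hdom : ∃ x : ℝ, 0 < x ∧ h x ≠ ⊤) :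
    BddAbove (Sset lam h) := by
  obtain ⟨x, hx0, hxt⟩ := hdom
  exact ⟨(lam + (h x).toReal) / x, fun w hw => w_bound hge hx0 hxt hw⟩

lemma tau_nonneg (hlam : 0 < lam) (h0 : h 0 = 0) (hge : ∀ x : ℝ, 0 ≤ h x)
    (hdom : ∃ x : ℝ, 0 < x ∧ h x ≠ ⊤) : 0 ≤ tau lam h :=
  le_csSup (Sbdd hge hdom) (Szero hlam h0 hge)

lemma mem_S_le_tau (hge : ∀ x : ℝ, 0 ≤ h x) (hdom : ∃ x : ℝ, 0 < x ∧ h x ≠ ⊤)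
    {w : ℝ} (hw : w ∈ Sset lam h) : w ≤ tau lam h :=
  le_csSup (Sbdd hge hdom) hw

lemma Htau_le (hlam : 0 < lam) (h0 : h 0 = 0) (hge : ∀ x : ℝ, 0 ≤ h x)
    (hdom : ∃ x : ℝ, 0 < x ∧ h x ≠ ⊤) : conj h (tau lam h) ≤ (lam : EReal) := by
  refine conj_le _ _ _ fun x => ?_
  by_cases hx : h x = ⊤
  · rw [hx, EReal.sub_top]; exact bot_le
  · have hc := hfin hge hx
    have hc0 : 0 ≤ (h x).toReal := by
      have := hge x; rw [hc] at this; exact_mod_cast this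
    rw [hc, ← EReal.coe_sub]
    refine EReal.coe_le_coe_iff.2 ?_
    rcases le_or_gt x 0 with hx0 | hx0
    · have h1 : tau lam h * x ≤ 0 :=
        mul_nonpos_of_nonneg_of_nonpos (tau_nonneg hlam h0 hge hdom) hx0
      linarith
    · have h1 : tau lam h ≤ (lam + (h x).toReal) / x := by
        refine csSup_le ⟨0, Szero hlam h0 hge⟩ fun w hw => w_bound hge hx0 hx hw
      rw [le_div_iff₀ hx0] at h1
      linarith

lemma H_gt_of_gt_tau (hlam : 0 < lam) (h0 : h 0 = 0) (hge : ∀ x : ℝ, 0 ≤ h x)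
    (hdom : ∃ x : ℝ, 0 < x ∧ h x ≠ ⊤) {w : ℝ} (hw : tau lam h < w) :
    (lam : EReal) < conj h w := by
  by_contra hle
  exact absurd (mem_S_le_tau hge hdom ⟨(tau_nonneg hlam h0 hge hdom).trans hw.le, not_lt.1 hle⟩)
    (not_le.2 hw)
end Lemmas3
section Lemmas4
variable {h : ℝ → EReal} {lam : ℝ}

lemma h_top_mono (h0 : h 0 = 0) (hge : ∀ x : ℝ, 0 ≤ h x) (hconv : EConvexOn h)
    {x₀ u : ℝ} (hx₀ : 0 < x₀) (htop : h x₀ = ⊤) (hu : x₀ < u) : h u = ⊤ := by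
  by_contra hut
  have hu0 : 0 < u := hx₀.trans hu
  have hc := hfin hge hut
  set a : ℝ := x₀ / u with ha
  have ha0 : 0 ≤ a := by positivity
  have ha1 : a ≤ 1 := by rw [ha, div_le_one hu0]; exact hu.le
  have key := hconv u 0 a (1 - a) ha0 (by linarith) (by ring)
  have he : a * u + (1 - a) * 0 = x₀ := by rw [ha]; field_simp; ring
  rw [he, htop, h0, mul_zero, add_zero] at key
  rw [hc, ← EReal.coe_mul] at key
  exact EReal.coe_ne_top _ (top_le_iff.1 key)

/-- Convexity lower bound: if `h x₀` is finite with `b ≤ (h x₀).toReal`, `x₀ > 0`, `x₀ ≤ u`,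
`h u` finite, then `b * u ≤ x₀ * (h u).toReal`. -/
lemma h_slope_lb (h0 : h 0 = 0) (hge : ∀ x : ℝ, 0 ≤ h x) (hconv : EConvexOn h)
    {x₀ u b : ℝ} (hx₀ : 0 < x₀) (hb : (b : EReal) ≤ h x₀) (hu : x₀ ≤ u) (hut : h u ≠ ⊤) :
    b * u ≤ x₀ * (h u).toReal := by
  have hu0 : 0 < u := lt_of_lt_of_le hx₀ hu
  have hc := hfin hge hut
  set a : ℝ := x₀ / u with ha
  have ha0 : 0 ≤ a := by positivity
  have ha1 : a ≤ 1 := by rw [ha, div_le_one hu0]; exact hu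
  have key := hconv u 0 a (1 - a) ha0 (by linarith) (by ring)
  have he : a * u + (1 - a) * 0 = x₀ := by rw [ha]; field_simp; ring
  rw [he, h0, mul_zero, add_zero, hc, ← EReal.coe_mul] at key
  have : b ≤ a * (h u).toReal := EReal.coe_le_coe_iff.1 (hb.trans key)
  rw [ha] at this
  rw [div_mul_eq_mul_div, le_div_iff₀ hu0] at this
  linarith [this]

lemma tau_pos (hlam : 0 < lam) (h0 : h 0 = 0) (hge : ∀ x : ℝ, 0 ≤ h x)
    (hconv : EConvexOn h) (hdom : ∃ x : ℝ, 0 < x ∧ h x ≠ ⊤)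
    (heven : ∀ x : ℝ, h (-x) = h x) (hnz : ∃ x : ℝ, h x ≠ 0) : 0 < tau lam h := by
  obtain ⟨x, hx⟩ := hnz
  have hxne : x ≠ 0 := fun e => hx (e ▸ h0)
  set x₀ : ℝ := |x| with hx₀def
  have hx₀ : 0 < x₀ := abs_pos.2 hxne
  have hx₀ne : h x₀ ≠ 0 := by rw [hx₀def, habs_h heven]; exact hx
  -- pick w > 0 with conj h w ≤ lam
  suffices hS : ∃ w : ℝ, 0 < w ∧ w ∈ Sset lam h by
    obtain ⟨w, hw0, hwS⟩ := hS
    exact lt_of_lt_of_le hw0 (mem_S_le_tau hge hdom hwS)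
  -- main bound: for suitable w, conj h w ≤ w * x₀
  by_cases htop : h x₀ = ⊤
  · set w : ℝ := lam / x₀ with hwdef
    refine ⟨w, by positivity, le_of_lt (by positivity), ?_⟩
    have hwx : w * x₀ = lam := by rw [hwdef]; field_simp
    refine conj_le _ _ _ fun x' => ?_
    by_cases hx' : h x' = ⊤
    · rw [hx', EReal.sub_top]; exact bot_le
    · have hc := hfin hge hx'
      have hc0 : 0 ≤ (h x').toReal := by
        have := hge x'; rw [hc] at this; exact_mod_cast this
      have hule : |x'| ≤ x₀ := by
        by_contra hgt
        exact (habs_h heven x' ▸ h_top_mono h0 hge hconv hx₀ htop (not_le.1 hgt) : h x' = ⊤) |> hx'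
      rw [hc, ← EReal.coe_sub]
      refine le_trans (EReal.coe_le_coe_iff.2 ?_) (le_of_eq (congrArg _ hwx))
      have hw0 : 0 < w := by positivity
      have : w * x' ≤ w * x₀ := by
        calc w * x' ≤ |w * x'| := le_abs_self _
        _ = w * |x'| := by rw [abs_mul, abs_of_nonneg hw0.le]
        _ ≤ w * x₀ := by nlinarith
      linarith
  · -- h x₀ finite with positive value b
    have hc₀ := hfin hge htop
    set b : ℝ := (h x₀).toReal with hbdef
    have hb0 : 0 < b := by
      have h1 : 0 ≤ h x₀ := hge x₀
      rw [hc₀] at h1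
      have : 0 ≤ b := by exact_mod_cast h1
      rcases this.lt_or_eq with hlt | he
      · exact hlt
      · exact absurd (by rw [hc₀, ← he]; norm_num) hx₀ne
    set w : ℝ := min (lam / x₀) (b / x₀) with hwdef
    have hw0 : 0 < w := lt_min (by positivity) (by positivity)
    refine ⟨w, hw0, hw0.le, ?_⟩
    have hwl : w * x₀ ≤ lam := by
      have : w ≤ lam / x₀ := min_le_left _ _
      rw [le_div_iff₀ hx₀] at this; linarith
    refine le_trans (conj_le _ _ _ fun x' => ?_) (EReal.coe_le_coe_iff.2 hwl)
    by_cases hx' : h x' = ⊤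
    · rw [hx', EReal.sub_top]; exact bot_le
    · have hc := hfin hge hx'
      have hc0 : 0 ≤ (h x').toReal := by
        have := hge x'; rw [hc] at this; exact_mod_cast this
      rw [hc, ← EReal.coe_sub]
      refine EReal.coe_le_coe_iff.2 ?_
      rcases le_or_gt |x'| x₀ with hule | hugt
      · have : w * x' ≤ w * x₀ := by
          calc w * x' ≤ |w * x'| := le_abs_self _
          _ = w * |x'| := by rw [abs_mul, abs_of_nonneg hw0.le]
          _ ≤ w * x₀ := by nlinarith
        nlinarith
      · -- |x'| > x₀ : use slope bound
        have habs' : h |x'| = h x' := habs_h heven x'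
        have hslope : b * |x'| ≤ x₀ * (h |x'|).toReal := by
          refine h_slope_lb h0 hge hconv hx₀ (le_of_eq hc₀.symm) hugt.le ?_
          rw [habs']; exact hx'
        rw [habs'] at hslope
        have hwb : w ≤ b / x₀ := min_le_right _ _
        rw [le_div_iff₀ hx₀] at hwb
        have h1 : w * x' ≤ w * |x'| := by
          calc w * x' ≤ |w * x'| := le_abs_self _
          _ = w * |x'| := by rw [abs_mul, abs_of_nonneg hw0.le]
        have h2 : w * |x'| ≤ (h x').toReal := by
          have hx'0 : (0:ℝ) < |x'| := hx₀.trans hugt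
          have : w * x₀ * |x'| ≤ b * |x'| := by nlinarith
          nlinarith
        nlinarith
end Lemmas4
section Lemmas5
variable {h : ℝ → EReal} {lam : ℝ}

lemma Hfin (h0 : h 0 = 0) {v : ℝ} (hv : conj h v ≠ ⊤) :
    conj h v = ((conj h v).toReal : EReal) := by
  refine (EReal.coe_toReal hv ?_).symm
  intro hb
  have := Hnonneg h0 v
  rw [hb] at this
  exact absurd this (by simp)

lemma Htau_eq (hlam : 0 < lam) (h0 : h 0 = 0) (hge : ∀ x : ℝ, 0 ≤ h x)
    (hdom : ∃ x : ℝ, 0 < x ∧ h x ≠ ⊤)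
    {y₀ : ℝ} (hy₀ : tau lam h < y₀) (hy₀t : conj h y₀ ≠ ⊤) :
    conj h (tau lam h) = (lam : EReal) := by
  refine le_antisymm (Htau_le hlam h0 hge hdom) ?_
  by_contra hlt
  have hHτt : conj h (tau lam h) ≠ ⊤ := fun e => hlt (e ▸ le_top)
  have hcτ := Hfin h0 hHτt
  set p : ℝ := (conj h (tau lam h)).toReal with hpdef
  have hp : p < lam := by
    have : conj h (tau lam h) < (lam : EReal) := not_le.1 hlt
    rw [hcτ] at this
    exact_mod_cast this
  have hcy := Hfin h0 hy₀t
  set q : ℝ := (conj h y₀).toReal with hqdef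
  set t : ℝ := (lam - p) / ((lam - p) + |q - p| + 1) with htdef
  have habs : 0 ≤ |q - p| := abs_nonneg _
  have ht0 : 0 < t := by rw [htdef]; exact div_pos (by linarith) (by linarith)
  have ht1 : t < 1 := by
    rw [htdef, div_lt_one (by linarith)]
    linarith
  set wt : ℝ := (1 - t) * tau lam h + t * y₀ with hwt
  have hτ0 : 0 ≤ tau lam h := tau_nonneg hlam h0 hge hdom
  have hwt0 : 0 ≤ wt := by nlinarith
  have hwtgt : tau lam h < wt := by rw [hwt]; nlinarith
  have hcomb := Hcomb hge ht0.le ht1.le (le_of_eq hcτ) (le_of_eq hcy)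
  have hval : (1 - t) * p + t * q < lam := by
    have h1 : t * |q - p| < lam - p := by
      rw [htdef, div_mul_eq_mul_div, div_lt_iff₀ (by linarith)]
      nlinarith
    have h2 : t * (q - p) ≤ t * |q - p| := by
      have := le_abs_self (q - p)
      nlinarith
    nlinarith
  have hwS : wt ∈ Sset lam h := ⟨hwt0, hcomb.trans (EReal.coe_le_coe_iff.2 hval.le)⟩
  exact absurd (mem_S_le_tau hge hdom hwS) (not_le.2 hwtgt)

/-- Three-point slope inequality through `(τ, lam)`:
for `y < τ < z` with finite values, `(lam - c_y) * (z - τ) ≤ (c_z - lam) * (τ - y)`. -/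
lemma three_point (hge : ∀ x : ℝ, 0 ≤ h x)
    {y z cy cz : ℝ} (hyz : y < tau lam h) (hz : tau lam h < z)
    (hcy : conj h y ≤ (cy : EReal)) (hcz : conj h z ≤ (cz : EReal))
    (hHτ : conj h (tau lam h) = (lam : EReal)) :
    (lam - cy) * (z - tau lam h) ≤ (cz - lam) * (tau lam h - y) := by
  set τ := tau lam h
  set t : ℝ := (τ - y) / (z - y) with htdef
  have hzy : 0 < z - y := by linarith
  have ht0 : 0 ≤ t := by rw [htdef]; exact div_nonneg (by linarith) hzy.le
  have ht1 : t ≤ 1 := by rw [htdef, div_le_one hzy]; linarith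
  have he : (1 - t) * y + t * z = τ := by rw [htdef]; field_simp; ring
  have hcomb := Hcomb hge ht0 ht1 hcy hcz
  rw [he, hHτ] at hcomb
  have key : lam ≤ (1 - t) * cy + t * cz := EReal.coe_le_coe_iff.1 hcomb
  rw [htdef] at key
  have h1 : lam * (z - y) ≤ (z - τ) * cy + (τ - y) * cz := by
    have := mul_le_mul_of_nonneg_right key hzy.le
    calc lam * (z - y) ≤ ((1 - (τ - y)/(z - y)) * cy + (τ - y)/(z - y) * cz) * (z - y) := this
    _ = (z - τ) * cy + (τ - y) * cz := by field_simp; ring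
  nlinarith
end Lemmas5
section Lemmas6
variable {h : ℝ → EReal} {lam : ℝ}

lemma subdiff_neg {F : ℝ → EReal} (hFe : ∀ x : ℝ, F (-x) = F x) {d v : ℝ}
    (hd : d ∈ subdiff F v) : -d ∈ subdiff F (-v) := by
  intro y
  have h1 := hd (-y)
  rw [hFe y] at h1
  rw [hFe v]
  have h2 : -d * (y - -v) = d * (-y - v) := by ring
  rw [h2]
  exact h1

lemma subdiff_Hτ_mem (hlam : 0 < lam) (h0 : h 0 = 0) (hge : ∀ x : ℝ, 0 ≤ h x)
    (hconv : EConvexOn h) (hdom : ∃ x : ℝ, 0 < x ∧ h x ≠ ⊤)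
    (heven : ∀ x : ℝ, h (-x) = h x) (hnz : ∃ x : ℝ, h x ≠ 0)
    {y₀ : ℝ} (hy₀ : tau lam h < y₀) (hy₀t : conj h y₀ ≠ ⊤) :
    sInf {s : ℝ | ∃ z, tau lam h < z ∧ conj h z ≠ ⊤ ∧
        s = ((conj h z).toReal - lam)/(z - tau lam h)} ∈ subdiff (conj h) (tau lam h) := by
  have hτpos : 0 < tau lam h := tau_pos hlam h0 hge hconv hdom heven hnz
  set τ := tau lam h with hτdef
  have hHτ : conj h τ = (lam : EReal) := Htau_eq hlam h0 hge hdom hy₀ hy₀t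
  set T : Set ℝ := {s : ℝ | ∃ z, τ < z ∧ conj h z ≠ ⊤ ∧
      s = ((conj h z).toReal - lam)/(z - τ)} with hTdef
  have hTne : T.Nonempty := ⟨_, y₀, hy₀, hy₀t, rfl⟩
  have hTbdd : ∀ s ∈ T, lam / τ ≤ s := by
    rintro s ⟨z, hz, hzt, rfl⟩
    have hcz := Hfin h0 hzt
    have h3 := three_point (lam := lam) hge hτpos hz
      (le_of_eq (by rw [H0 h0 hge]; norm_num) : conj h 0 ≤ ((0:ℝ) : EReal))
      (le_of_eq hcz) hHτ
    rw [div_le_div_iff₀ hτpos (by linarith)]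
    nlinarith
  have hbdd : BddBelow T := ⟨lam / τ, hTbdd⟩
  set D := sInf T with hDdef
  intro y
  rw [hHτ, ← EReal.coe_add]
  by_cases hyt : conj h y = ⊤
  · rw [hyt]; exact le_top
  · have hcy := Hfin h0 hyt
    rw [hcy]
    refine EReal.coe_le_coe_iff.2 ?_
    rcases lt_trichotomy y τ with hlt | heq | hgt
    · have hD : (lam - (conj h y).toReal) / (τ - y) ≤ D := by
        refine le_csInf hTne ?_
        rintro s ⟨z, hz, hzt, rfl⟩
        have hcz := Hfin h0 hzt
        have h3 := three_point (lam := lam) hge hlt hz (le_of_eq hcy) (le_of_eq hcz) hHτ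
        rw [div_le_div_iff₀ (by linarith) (by linarith)]
        nlinarith
      rw [div_le_iff₀ (by linarith : (0:ℝ) < τ - y)] at hD
      nlinarith
    · have h5 : (conj h y).toReal = lam := by rw [heq, hHτ]; simp
      rw [heq] at h5 ⊢
      rw [h5]
      simp
    · have hD : D ≤ ((conj h y).toReal - lam) / (y - τ) := csInf_le hbdd ⟨y, hgt, hyt, rfl⟩
      rw [le_div_iff₀ (by linarith : (0:ℝ) < y - τ)] at hD
      nlinarith
end Lemmas6
section Lemmas7
variable {h : ℝ → EReal} {lam : ℝ}

lemma Gzero (hlam : 0 < lam) (h0 : h 0 = 0) (hge : ∀ x : ℝ, 0 ≤ h x) {v : ℝ}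
    (hv : conj h v ≤ (lam : EReal)) : conj (gfun lam h) v = 0 := by
  rw [Gval hlam h0 hge]
  refine sup_eq_right.2 ?_
  rw [EReal.sub_le_iff_le_add (Or.inl (EReal.coe_ne_bot lam)) (Or.inl (EReal.coe_ne_top lam))]
  simpa using hv

lemma Gcoe (hlam : 0 < lam) (h0 : h 0 = 0) (hge : ∀ x : ℝ, 0 ≤ h x) {v p : ℝ}
    (hv : conj h v = (p : EReal)) (hp : lam ≤ p) :
    conj (gfun lam h) v = ((p - lam : ℝ) : EReal) := by
  rw [Gval hlam h0 hge, hv, ← EReal.coe_sub]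
  exact sup_eq_left.2 (EReal.coe_nonneg.2 (by linarith))

lemma Gtop (hlam : 0 < lam) (h0 : h 0 = 0) (hge : ∀ x : ℝ, 0 ≤ h x) {v : ℝ}
    (hv : conj h v = ⊤) : conj (gfun lam h) v = ⊤ := by
  rw [Gval hlam h0 hge, hv, EReal.top_sub_coe]
  simp

lemma case_lt (hlam : 0 < lam) (h0 : h 0 = 0) (hge : ∀ x : ℝ, 0 ≤ h x)
    (hdom : ∃ x : ℝ, 0 < x ∧ h x ≠ ⊤) (heven : ∀ x : ℝ, h (-x) = h x)
    {v : ℝ} (hv : |v| < tau lam h) :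
    subdiff (conj (gfun lam h)) v = {0} := by
  obtain ⟨w, hwS, hw⟩ := exists_lt_of_lt_csSup ⟨0, Szero hlam h0 hge⟩ hv
  have hHw : conj h w ≤ (lam : EReal) := hwS.2
  have hHmw : conj h (-w) ≤ (lam : EReal) := by rw [Heven heven]; exact hHw
  have hHv : conj h v ≤ (lam : EReal) := by
    rw [Habs heven]
    exact (Hmono h0 hge heven (abs_nonneg v) hw.le).trans hHw
  have hGv : conj (gfun lam h) v = 0 := Gzero hlam h0 hge hHv
  have hGw : conj (gfun lam h) w = 0 := Gzero hlam h0 hge hHw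
  have hGmw : conj (gfun lam h) (-w) = 0 := Gzero hlam h0 hge hHmw
  have hv1 : v < w := lt_of_le_of_lt (le_abs_self v) hw
  have hv2 : -w < v := by
    have := neg_abs_le v
    linarith
  ext d
  simp only [Set.mem_singleton_iff]
  constructor
  · intro hd
    have h1 := hd w
    have h2 := hd (-w)
    rw [hGv, hGw, zero_add] at h1
    rw [hGv, hGmw, zero_add] at h2
    have h1' : d * (w - v) ≤ 0 := EReal.coe_nonpos.1 h1
    have h2' : d * (-w - v) ≤ 0 := EReal.coe_nonpos.1 h2
    nlinarith
  · rintro rfl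
    intro y
    rw [hGv, zero_add]
    simpa using Gnonneg (lam := lam) h0 y

lemma case_gt (hlam : 0 < lam) (h0 : h 0 = 0) (hge : ∀ x : ℝ, 0 ≤ h x)
    (hdom : ∃ x : ℝ, 0 < x ∧ h x ≠ ⊤) (heven : ∀ x : ℝ, h (-x) = h x)
    {v : ℝ} (hv : tau lam h < |v|) (hGt : conj (gfun lam h) v ≠ ⊤) :
    subdiff (conj (gfun lam h)) v = subdiff (conj h) v := by
  set τ := tau lam h with hτdef
  have hτ0 : 0 ≤ τ := tau_nonneg hlam h0 hge hdom
  have hHvt : conj h v ≠ ⊤ := fun e => hGt (Gtop hlam h0 hge e)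
  have hcv := Hfin h0 hHvt
  set p : ℝ := (conj h v).toReal with hpdef
  have hp : lam < p := by
    have h1 : (lam : EReal) < conj h |v| := H_gt_of_gt_tau hlam h0 hge hdom hv
    rw [← Habs heven, hcv] at h1
    exact_mod_cast h1
  have hGv : conj (gfun lam h) v = ((p - lam : ℝ) : EReal) := Gcoe hlam h0 hge hcv hp.le
  ext d
  constructor
  · intro hd y
    by_cases hyt : conj h y = ⊤
    · rw [hyt]; exact le_top
    · have hcy := Hfin h0 hyt
      set c : ℝ := (conj h y).toReal with hcdef
      rcases le_or_gt lam c with hc | hc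
      · have h1 := hd y
        rw [hGv, Gcoe hlam h0 hge hcy hc, ← EReal.coe_add] at h1
        have h1' : p - lam + d * (y - v) ≤ c - lam := EReal.coe_le_coe_iff.1 h1
        rw [hcv, hcy, ← EReal.coe_add]
        refine EReal.coe_le_coe_iff.2 (by linarith)
      · -- c < lam
        have hyS : |y| ∈ Sset lam h := by
          refine ⟨abs_nonneg y, ?_⟩
          rw [← Habs heven, hcy]
          exact_mod_cast hc.le
        have hyτ : |y| ≤ τ := mem_S_le_tau hge hdom hyS
        have hyv : y ≠ v := by
          intro e
          rw [e] at hyτ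
          exact absurd hv (not_lt.2 hyτ)
        set δ : ℝ := |y - v| with hδdef
        have hδ0 : 0 < δ := abs_pos.2 (sub_ne_zero.2 hyv)
        set t : ℝ := min 1 ((|v| - τ)/(2*δ)) with htdef
        have ht0 : 0 < t := lt_min one_pos (div_pos (by linarith) (by positivity))
        have ht1 : t ≤ 1 := min_le_left _ _
        have htδ : t * δ ≤ (|v| - τ)/2 := by
          have : t ≤ (|v| - τ)/(2*δ) := min_le_right _ _
          rw [le_div_iff₀ (by positivity)] at this
          linarith
        set yt : ℝ := v + t * (y - v) with hytdef
        have hyteq : (1 - t) * v + t * y = yt := by rw [hytdef]; ring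
        have habs_yt_le : |yt| ≤ |v| := by
          rw [hytdef]
          calc |v + t * (y - v)| = |(1-t) * v + t * y| := by ring_nf
          _ ≤ |(1-t) * v| + |t * y| := abs_add_le _ _
          _ = (1-t) * |v| + t * |y| := by
              rw [abs_mul, abs_mul, abs_of_nonneg (by linarith : (0:ℝ) ≤ 1 - t),
                abs_of_nonneg ht0.le]
          _ ≤ |v| := by nlinarith [abs_nonneg y, (hyτ.trans_lt hv : |y| < |v|)]
        have habs_yt_gt : τ < |yt| := by
          have h1 : |v| ≤ |yt| + t * δ := by
            calc |v| = |yt - t * (y - v)| := by rw [hytdef]; ring_nf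
            _ ≤ |yt| + |t * (y - v)| := abs_sub _ _
            _ = |yt| + t * δ := by rw [abs_mul, abs_of_nonneg ht0.le, hδdef]
          linarith
        have hHyt_le : conj h yt ≤ (p : EReal) := by
          rw [Habs heven, ← hcv]
          calc conj h |yt| ≤ conj h |v| := Hmono h0 hge heven (abs_nonneg _) habs_yt_le
          _ = conj h v := (Habs heven v).symm
        have hHyt_t : conj h yt ≠ ⊤ := fun e => by rw [e] at hHyt_le; exact (EReal.coe_ne_top p) (top_le_iff.1 hHyt_le)
        have hcyt := Hfin h0 hHyt_t
        set r : ℝ := (conj h yt).toReal with hrdef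
        have hr_gt : lam < r := by
          have h1 : (lam : EReal) < conj h |yt| := H_gt_of_gt_tau hlam h0 hge hdom habs_yt_gt
          rw [← Habs heven, hcyt] at h1
          exact_mod_cast h1
        have hr_le : r ≤ p := by
          rw [hcyt] at hHyt_le; exact_mod_cast hHyt_le
        have h2 := hd yt
        rw [hGv, Gcoe hlam h0 hge hcyt hr_gt.le, ← EReal.coe_add] at h2
        have h2' : p - lam + d * (yt - v) ≤ r - lam := EReal.coe_le_coe_iff.1 h2
        have hytv : yt - v = t * (y - v) := by rw [hytdef]; ring
        rw [hytv] at h2'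
        have hcomb := Hcomb hge ht0.le ht1 (le_of_eq hcv) (le_of_eq hcy)
        rw [hyteq, hcyt] at hcomb
        have hcomb' : r ≤ (1 - t) * p + t * c := EReal.coe_le_coe_iff.1 hcomb
        have hkey : d * (y - v) ≤ c - p := by
          have : t * (d * (y - v)) ≤ t * (c - p) := by nlinarith
          exact le_of_mul_le_mul_left this ht0
        rw [hcv, hcy, ← EReal.coe_add]
        exact EReal.coe_le_coe_iff.2 (by linarith)
  · intro hd y
    have h1 := hd y
    rw [hGv, Gval hlam h0 hge]
    refine le_trans ?_ le_sup_left
    rw [hcv] at h1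
    have h1' : ((p + d * (y - v) : ℝ) : EReal) ≤ conj h y := by
      rw [EReal.coe_add]; exact h1
    calc ((p - lam : ℝ) : EReal) + ((d * (y - v) : ℝ) : EReal)
        = ((p + d * (y - v) : ℝ) : EReal) - (lam : EReal) := by
          rw [← EReal.coe_add, ← EReal.coe_sub]; norm_cast; ring
    _ ≤ conj h y - (lam : EReal) := EReal.sub_le_sub h1' le_rfl
end Lemmas7
section Lemmas8
variable {h : ℝ → EReal} {lam : ℝ}

lemma case_eq (hlam : 0 < lam) (h0 : h 0 = 0) (hge : ∀ x : ℝ, 0 ≤ h x)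
    (hconv : EConvexOn h) (hdom : ∃ x : ℝ, 0 < x ∧ h x ≠ ⊤)
    (heven : ∀ x : ℝ, h (-x) = h x) (hnz : ∃ x : ℝ, h x ≠ 0) :
    subdiff (conj (gfun lam h)) (tau lam h) =
      {d : ℝ | 0 ≤ d ∧ ((d : ℝ) : EReal) ≤ mu lam h} := by
  set τ := tau lam h with hτdef
  have hτpos : 0 < τ := tau_pos hlam h0 hge hconv hdom heven hnz
  have hHτle : conj h τ ≤ (lam : EReal) := Htau_le hlam h0 hge hdom
  have hGτ : conj (gfun lam h) τ = 0 := Gzero hlam h0 hge hHτle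
  have hG0 : conj (gfun lam h) 0 = 0 := by
    refine Gzero hlam h0 hge ?_
    rw [H0 h0 hge]; exact_mod_cast hlam.le
  ext d
  simp only [Set.mem_setOf_eq]
  constructor
  · intro hd
    have hd0 : 0 ≤ d := by
      have h1 := hd 0
      rw [hGτ, hG0, zero_add] at h1
      have : d * (0 - τ) ≤ 0 := EReal.coe_nonpos.1 h1
      nlinarith
    refine ⟨hd0, ?_⟩
    by_cases hne : (subdiff (conj h) τ).Nonempty
    · rw [mu, if_pos hne]
      obtain ⟨e, he⟩ := hne
      have key : ∀ y, τ < y → conj h y ≠ ⊤ → lam + d * (y - τ) ≤ (conj h y).toReal := by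
        intro y hy hyt
        have hHτeq : conj h τ = (lam : EReal) := Htau_eq hlam h0 hge hdom hy hyt
        have hcy := Hfin h0 hyt
        have hc : lam < (conj h y).toReal := by
          have h1 : (lam : EReal) < conj h y := H_gt_of_gt_tau hlam h0 hge hdom hy
          rw [hcy] at h1; exact_mod_cast h1
        have h1 := hd y
        rw [hGτ, zero_add, Gcoe hlam h0 hge hcy hc.le] at h1
        have := EReal.coe_le_coe_iff.1 h1
        linarith
      have hmax : max d e ∈ subdiff (conj h) τ := by
        intro y
        rcases lt_trichotomy y τ with hlt | heq | hgt
        · have h1 := he y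
          have h2 : max d e * (y - τ) ≤ e * (y - τ) := by
            nlinarith [le_max_right d e]
          exact le_trans (add_le_add le_rfl (EReal.coe_le_coe_iff.2 h2)) h1
        · rw [heq]; simp
        · by_cases hyt : conj h y = ⊤
          · rw [hyt]; exact le_top
          · have hHτeq : conj h τ = (lam : EReal) := Htau_eq hlam h0 hge hdom hgt hyt
            have hcy := Hfin h0 hyt
            rw [hHτeq, hcy, ← EReal.coe_add]
            refine EReal.coe_le_coe_iff.2 ?_
            rcases le_total d e with hde | hde
            · rw [max_eq_right hde]
              have h1 := he y
              rw [hHτeq, hcy, ← EReal.coe_add] at h1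
              exact EReal.coe_le_coe_iff.1 h1
            · rw [max_eq_left hde]
              exact key y hgt hyt
      have hmem : max d e ∈ {x : ℝ | 0 ≤ x ∧ x ∈ subdiff (conj h) τ} :=
        ⟨le_trans hd0 (le_max_left d e), hmax⟩
      calc ((d : ℝ) : EReal) ≤ ((max d e : ℝ) : EReal) :=
            EReal.coe_le_coe_iff.2 (le_max_left d e)
      _ ≤ _ := le_sSup (Set.mem_image_of_mem _ hmem)
    · rw [mu, if_neg hne]; exact le_top
  · rintro ⟨hd0, hdμ⟩
    intro y
    rw [hGτ, zero_add]
    rcases le_or_gt y τ with hy | hy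
    · refine le_trans ?_ (Gnonneg h0 y)
      refine EReal.coe_nonpos.2 ?_
      nlinarith
    · by_cases hyt : conj h y = ⊤
      · rw [Gtop hlam h0 hge hyt]; exact le_top
      · have hHτeq : conj h τ = (lam : EReal) := Htau_eq hlam h0 hge hdom hy hyt
        have hcy := Hfin h0 hyt
        set c : ℝ := (conj h y).toReal with hcdef
        have hc : lam < c := by
          have h1 : (lam : EReal) < conj h y := H_gt_of_gt_tau hlam h0 hge hdom hy
          rw [hcy] at h1; exact_mod_cast h1
        have hne : (subdiff (conj h) τ).Nonempty :=
          ⟨_, subdiff_Hτ_mem hlam h0 hge hconv hdom heven hnz hy hyt⟩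
        rw [mu, if_pos hne] at hdμ
        have hub : sSup ((fun x : ℝ => (x : EReal)) '' {x : ℝ | 0 ≤ x ∧ x ∈ subdiff (conj h) τ})
            ≤ (((c - lam)/(y - τ) : ℝ) : EReal) := by
          refine sSup_le ?_
          rintro _ ⟨x, ⟨hx0, hxs⟩, rfl⟩
          have h1 := hxs y
          rw [hHτeq, hcy, ← EReal.coe_add] at h1
          have h1' := EReal.coe_le_coe_iff.1 h1
          refine EReal.coe_le_coe_iff.2 ?_
          rw [le_div_iff₀ (by linarith : (0:ℝ) < y - τ)]
          linarith
        have hd' : d ≤ (c - lam)/(y - τ) := EReal.coe_le_coe_iff.1 (hdμ.trans hub)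
        rw [Gcoe hlam h0 hge hcy hc.le]
        refine EReal.coe_le_coe_iff.2 ?_
        rw [le_div_iff₀ (by linarith : (0:ℝ) < y - τ)] at hd'
        linarith
end Lemmas8
theorem subdiff_conj_gfun (lam : ℝ) (h : ℝ → EReal) (hlam : 0 < lam)
    (h0 : h 0 = 0) (hge : ∀ x : ℝ, 0 ≤ h x)
    (hlsc : LowerSemicontinuous h) (hconv : EConvexOn h)
    (hdom : ∃ x : ℝ, 0 < x ∧ h x ≠ ⊤) (heven : ∀ x : ℝ, h (-x) = h x)
    (hnz : ∃ x : ℝ, h x ≠ 0) :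
    ∀ v : ℝ, conj (gfun lam h) v ≠ ⊤ →
      ((|v| < tau lam h → subdiff (conj (gfun lam h)) v = {0}) ∧
       (|v| = tau lam h →
          subdiff (conj (gfun lam h)) v =
            {d : ℝ | 0 ≤ Real.sign v * d ∧
              ((Real.sign v * d : ℝ) : EReal) ≤ mu lam h}) ∧
       (tau lam h < |v| →
          subdiff (conj (gfun lam h)) v = subdiff (conj h) v)) := by
  intro v hGv
  have hτpos : 0 < tau lam h := tau_pos hlam h0 hge hconv hdom heven hnz
  have hgeven : ∀ x : ℝ, gfun lam h (-x) = gfun lam h x := by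
    intro x
    simp only [gfun, neg_eq_zero, heven]
  have hGeven : ∀ w : ℝ, conj (gfun lam h) (-w) = conj (gfun lam h) w :=
    fun w => Heven hgeven w
  refine ⟨fun hlt => case_lt hlam h0 hge hdom heven hlt, fun heq => ?_,
    fun hgt => case_gt hlam h0 hge hdom heven hgt hGv⟩
  rcases (abs_eq (le_of_lt hτpos)).1 heq with hveq | hveq
  · subst hveq
    rw [case_eq hlam h0 hge hconv hdom heven hnz]
    ext d
    simp [Real.sign_of_pos hτpos]
  · subst hveq
    have hsgn : Real.sign (-(tau lam h)) = -1 := Real.sign_of_neg (by linarith)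
    ext d
    have hiff : d ∈ subdiff (conj (gfun lam h)) (-(tau lam h)) ↔
        -d ∈ subdiff (conj (gfun lam h)) (tau lam h) := by
      constructor
      · intro hd
        have := subdiff_neg hGeven hd
        rwa [neg_neg] at this
      · intro hd
        have := subdiff_neg hGeven hd
        rwa [neg_neg] at this
    rw [Set.mem_setOf_eq, hiff, case_eq hlam h0 hge hconv hdom heven hnz]
    simp only [Set.mem_setOf_eq, hsgn, neg_one_mul]
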